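/- Let x ∈ N and n' ∈ N'(w). Then the functions φ_{V₃}(x) = det [[b₀, b₁, b₂],[1, d₁, d₂],[0, b₀, b₁]] and φ_{V₄}(x) = det [[b₀, b₁, b₂, b₃],[1, d₁, d₂, d₃],[0, b₀, b₁, b₂],[0, 1, d₁, d₂]], computed from the power series coefficients of the entries of a matrix, satisfy φ_{V₃}(x·n') = φ_{V₃}(x) and φ_{V₄}(x·n') = φ_{V₄}(x); that is, these determinantal expressions are invariant under right multiplication by N'(w). -/

import Mathlib

open PowerSeries

/-- Membership in the unipotent group `N` of the affine Kac–Moody group of type `Ã₁`: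
matrices over `ℂ[[z]]` with determinant 1, constant terms of the diagonal entries
equal to `1`, and constant term of the lower-left entry equal to `0`. -/
def memN (x : Matrix (Fin 2) (Fin 2) (PowerSeries ℂ)) : Prop :=
  x.det = 1 ∧
    constantCoeff (x 0 0) = 1 ∧ constantCoeff (x 1 1) = 1 ∧
    constantCoeff (x 1 0) = 0

/-- Membership in the subgroup `N'(w)` for `w = s₂s₁s₂s₁`: elements of `N` whose
upper-right entry is divisible by `z⁴`. -/
def memN' (x : Matrix (Fin 2) (Fin 2) (PowerSeries ℂ)) : Prop :=
  memN x ∧ (PowerSeries.X : PowerSeries ℂ) ^ 4 ∣ x 0 1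


set_option maxHeartbeats 1600000

private lemma det_fin_four_aux (M : Matrix (Fin 4) (Fin 4) ℂ) :
    M.det =
      M 0 0 * (M 1 1 * (M 2 2 * M 3 3 - M 2 3 * M 3 2)
        - M 1 2 * (M 2 1 * M 3 3 - M 2 3 * M 3 1)
        + M 1 3 * (M 2 1 * M 3 2 - M 2 2 * M 3 1))
      - M 0 1 * (M 1 0 * (M 2 2 * M 3 3 - M 2 3 * M 3 2)
        - M 1 2 * (M 2 0 * M 3 3 - M 2 3 * M 3 0)
        + M 1 3 * (M 2 0 * M 3 2 - M 2 2 * M 3 0))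
      + M 0 2 * (M 1 0 * (M 2 1 * M 3 3 - M 2 3 * M 3 1)
        - M 1 1 * (M 2 0 * M 3 3 - M 2 3 * M 3 0)
        + M 1 3 * (M 2 0 * M 3 1 - M 2 1 * M 3 0))
      - M 0 3 * (M 1 0 * (M 2 1 * M 3 2 - M 2 2 * M 3 1)
        - M 1 1 * (M 2 0 * M 3 2 - M 2 2 * M 3 0)
        + M 1 2 * (M 2 0 * M 3 1 - M 2 1 * M 3 0)) := by
  rw [Matrix.det_succ_row_zero]
  simp [Fin.sum_univ_succ, Matrix.det_fin_three, Fin.succAbove,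
    show (Fin.succ 2 : Fin 4) = 3 from rfl, show (Fin.castSucc 2 : Fin 4) = 2 from rfl,
    show (((2 : Fin 4)).succAbove 2 : Fin 4) = 3 by decide,
    show (((1 : Fin 4)).succAbove 2 : Fin 4) = 3 by decide,
    Fin.succ_zero_eq_one, Fin.succ_one_eq_two]
  ring

/-- The determinantal functions `φ_{V₃}` and `φ_{V₄}` on `N`, computed from the
power series coefficients `b_k, d_k` of the entries, are invariant under right
multiplication by `N'(w)`. -/
theorem phi_V3_V4_Nprime_invariant
    (x n' : Matrix (Fin 2) (Fin 2) (PowerSeries ℂ))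
    (hx : memN x) (hn' : memN' n') :
    (let y := x * n'
     let b : ℕ → ℂ := fun k => coeff k (y 0 1)
     let d : ℕ → ℂ := fun k => coeff k (y 1 1)
     Matrix.det !![b 0, b 1, b 2; 1, d 1, d 2; 0, b 0, b 1]) =
    (let b : ℕ → ℂ := fun k => coeff k (x 0 1)
     let d : ℕ → ℂ := fun k => coeff k (x 1 1)
     Matrix.det !![b 0, b 1, b 2; 1, d 1, d 2; 0, b 0, b 1]) ∧
    (let y := x * n'
     let b : ℕ → ℂ := fun k => coeff k (y 0 1)
     let d : ℕ → ℂ := fun k => coeff k (y 1 1)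
     Matrix.det !![b 0, b 1, b 2, b 3; 1, d 1, d 2, d 3;
                   0, b 0, b 1, b 2; 0, 1, d 1, d 2]) =
    (let b : ℕ → ℂ := fun k => coeff k (x 0 1)
     let d : ℕ → ℂ := fun k => coeff k (x 1 1)
     Matrix.det !![b 0, b 1, b 2, b 3; 1, d 1, d 2, d 3;
                   0, b 0, b 1, b 2; 0, 1, d 1, d 2]) := by
  obtain ⟨hdet, ha, hd, hc⟩ := hx
  obtain ⟨⟨hdet', hA, hD, hC⟩, hB⟩ := hn'
  have hB4 : ∀ m : ℕ, m < 4 → coeff m (n' 0 1) = 0 :=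
    (PowerSeries.X_pow_dvd_iff).mp hB
  have hy01 : (x * n') 0 1 = x 0 0 * n' 0 1 + x 0 1 * n' 1 1 := by
    simp [Matrix.mul_apply, Fin.sum_univ_two]
  have hy11 : (x * n') 1 1 = x 1 0 * n' 0 1 + x 1 1 * n' 1 1 := by
    simp [Matrix.mul_apply, Fin.sum_univ_two]
  have hzB : ∀ k : ℕ, k < 4 → ∀ f : PowerSeries ℂ, coeff k (f * n' 0 1) = 0 := by
    intro k hk f
    rw [coeff_mul]
    apply Finset.sum_eq_zero
    intro p hp
    rw [Finset.HasAntidiagonal.mem_antidiagonal] at hp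
    rw [hB4 p.2 (by omega), mul_zero]
  have hd0 : coeff 0 (x 1 1) = 1 := by
    rw [coeff_zero_eq_constantCoeff]; exact hd
  have hD0 : coeff 0 (n' 1 1) = 1 := by
    rw [coeff_zero_eq_constantCoeff]; exact hD
  have cb : ∀ k : ℕ, k < 4 → coeff k ((x * n') 0 1) =
      ∑ p ∈ Finset.HasAntidiagonal.antidiagonal k, coeff p.1 (x 0 1) * coeff p.2 (n' 1 1) := by
    intro k hk
    rw [hy01, map_add, hzB k hk, zero_add, coeff_mul]
  have cd : ∀ k : ℕ, k < 4 → coeff k ((x * n') 1 1) =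
      ∑ p ∈ Finset.HasAntidiagonal.antidiagonal k, coeff p.1 (x 1 1) * coeff p.2 (n' 1 1) := by
    intro k hk
    rw [hy11, map_add, hzB k hk, zero_add, coeff_mul]
  refine ⟨?_, ?_⟩ <;>
  · simp only [Matrix.det_fin_three, det_fin_four_aux, Matrix.cons_val', Matrix.cons_val_zero,
      Matrix.cons_val_one, Matrix.head_cons, Matrix.empty_val', Matrix.cons_val_fin_one,
      Matrix.head_fin_const, Matrix.cons_val_two, Matrix.cons_val_three, Matrix.vecHead,
      Matrix.vecTail, Function.comp_apply, Fin.succ_zero_eq_one, Fin.succ_one_eq_two]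
    simp only [Matrix.of_apply, Matrix.cons_val_zero, Matrix.cons_val_one, Matrix.head_cons,
      Matrix.cons_val_two, Matrix.cons_val_three, Matrix.vecHead, Matrix.vecTail,
      Function.comp_apply, Fin.succ_zero_eq_one, Fin.succ_one_eq_two]
    simp only [cb 0 (by norm_num), cb 1 (by norm_num), cb 2 (by norm_num), cb 3 (by norm_num),
      cd 1 (by norm_num), cd 2 (by norm_num), cd 3 (by norm_num)]
    simp only [Finset.Nat.sum_antidiagonal_eq_sum_range_succ_mk, Finset.sum_range_succ,
      Finset.sum_range_zero, zero_add]
    rw [hd0, hD0]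
    ring
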